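/- arXiv:1709.00038 — 2 statements merged into one kernel-verified Lean document; each statement's English description precedes it below -/
import Mathlib

section
/- In the one-dimensional frog model on $\mathbb{Z}$ where each frog performs a random walk stepping $+1$ with probability $\frac{1+\alpha}{2}$ and $-1$ with probability $\frac{1-\alpha}{2}$ for some $\alpha > 0$, with one sleeping frog at each nonzero site and one active frog at $0$, there exists $c > 0$ such that the probability that site $-n$ is ever visited by an active frog is at most $e^{-cn}$ for all $n \in \mathbb{N}$. -/
open MeasureTheory
open scoped ENNReal

namespace Stmt7Aux

open ProbabilityTheory MeasurableSpace Set

variable {Ω : Type*}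

/-- The event that the frog starting at `x` ever visits a site `≤ c`. -/
def Rle (S : ℤ → ℕ → Ω → ℤ) (x c : ℤ) : Set Ω := {ω | ∃ k, S x k ω ≤ c}

/-- σ-algebra generated by one increment of one frog. -/
def mIncr [MeasurableSpace Ω] (S : ℤ → ℕ → Ω → ℤ) (i : ℤ × ℕ) : MeasurableSpace Ω :=
  MeasurableSpace.comap ((fun (p : ℤ × ℕ) (ω : Ω) => S p.1 (p.2 + 1) ω - S p.1 p.2 ω) i)
    inferInstance

/-- σ-algebra generated by a set of increments. -/
def MI [MeasurableSpace Ω] (S : ℤ → ℕ → Ω → ℤ) (I : Set (ℤ × ℕ)) : MeasurableSpace Ω :=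
  ⨆ i ∈ I, mIncr S i

/-- σ-algebra generated by the frogs in a set `B` of sites. -/
def MB [MeasurableSpace Ω] (S : ℤ → ℕ → Ω → ℤ) (B : Set ℤ) : MeasurableSpace Ω :=
  MI S (B ×ˢ (Set.univ : Set ℕ))

/-- Some frog of `B` descends to `b` or below. -/
def FinalE (S : ℤ → ℕ → Ω → ℤ) (B : Set ℤ) (b : ℤ) : Set Ω := ⋃ x ∈ B, Rle S x b

/-- The minimum over frogs of `B` of all visited values is exactly `b`. -/
def ExactE (S : ℤ → ℕ → Ω → ℤ) (B : Set ℤ) (b : ℤ) : Set Ω :=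
  (⋃ x ∈ B, Rle S x b) ∩ ⋂ x ∈ B, (Rle S x (b - 1))ᶜ

/-- The record-process event-tree: current record level `l`, fresh block `B`,
target `l - k`. -/
def T (S : ℤ → ℕ → Ω → ℤ) : ℕ → ℤ → Set ℤ → Set Ω
  | k, l, B =>
    FinalE S B (l - k) ∪
      ⋃ (v : ℕ) (hv : v ∈ Finset.Ico 1 k),
        (ExactE S B (l - v) ∩ T S (k - v) (l - v) (Set.Ico (l - v) l))
  termination_by k _ _ => k
  decreasing_by simp only [Finset.mem_Ico] at hv; omega

section Lemmas

variable [MeasurableSpace Ω] (μ : Measure Ω) [IsProbabilityMeasure μ]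
variable {S : ℤ → ℕ → Ω → ℤ} {α : ℝ}

lemma measurable_rle (hmeas : ∀ x n, Measurable (S x n)) (x c : ℤ) :
    MeasurableSet (Rle S x c) := by
  have : Rle S x c = ⋃ k, S x k ⁻¹' Set.Iic c := by
    ext ω; simp [Rle, Set.mem_iUnion, Set.mem_preimage]
  rw [this]
  exact MeasurableSet.iUnion fun k => (hmeas x k) measurableSet_Iic

lemma mIncr_le (hmeas : ∀ x n, Measurable (S x n)) (i : ℤ × ℕ) :
    mIncr S i ≤ ‹MeasurableSpace Ω› :=
  Measurable.comap_le (((hmeas i.1 (i.2+1)).sub (hmeas i.1 i.2)))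

lemma MI_le (hmeas : ∀ x n, Measurable (S x n)) (I : Set (ℤ × ℕ)) :
    MI S I ≤ ‹MeasurableSpace Ω› := by
  apply iSup₂_le
  intro i _
  exact mIncr_le hmeas i

lemma MI_mono {I J : Set (ℤ × ℕ)} (h : I ⊆ J) :
    MI S I ≤ MI S J := by
  apply iSup₂_le
  intro i hi
  exact le_iSup₂ (f := fun (i : ℤ × ℕ) (_ : i ∈ J) => mIncr S i) i (h hi)

lemma indep_MI (hmeas : ∀ x n, Measurable (S x n))
    (hindep : ProbabilityTheory.iIndepFun
      (fun (p : ℤ × ℕ) (ω : Ω) => S p.1 (p.2 + 1) ω - S p.1 p.2 ω) μ)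
    {I J : Set (ℤ × ℕ)} (h : Disjoint I J) :
    Indep (MI S I) (MI S J) μ := by
  have hi : ProbabilityTheory.iIndep (fun i => mIncr S i) μ :=
    (ProbabilityTheory.iIndepFun_iff_iIndep _ _ _).1 hindep
  exact ProbabilityTheory.indep_iSup_of_disjoint (fun i => mIncr_le hmeas i) hi h

lemma indep_MB (hmeas : ∀ x n, Measurable (S x n))
    (hindep : ProbabilityTheory.iIndepFun
      (fun (p : ℤ × ℕ) (ω : Ω) => S p.1 (p.2 + 1) ω - S p.1 p.2 ω) μ)
    {A B : Set ℤ} (h : Disjoint A B) :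
    Indep (MB S A) (MB S B) μ := by
  apply indep_MI μ hmeas hindep
  rw [Set.disjoint_left]
  rintro ⟨x, k⟩ hx hy
  simp only [Set.mem_prod] at hx hy
  exact Set.disjoint_left.1 h hx.1 hy.1

lemma S_eq (hstart : ∀ x ω, S x 0 ω = x) (x : ℤ) (k : ℕ) (ω : Ω) :
    S x k ω = x + ∑ i ∈ Finset.range k, (S x (i + 1) ω - S x i ω) := by
  induction k with
  | zero => simp [hstart]
  | succ k ih => rw [Finset.sum_range_succ]; omega

lemma measurable_incr_MI {I : Set (ℤ × ℕ)} {x : ℤ} {i : ℕ} (hi : (x, i) ∈ I) :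
    Measurable[MI S I] (fun ω => S x (i + 1) ω - S x i ω) := by
  have h1 : Measurable[mIncr S (x, i)] (fun ω => S x (i + 1) ω - S x i ω) :=
    comap_measurable _
  exact h1.mono (le_iSup₂ (f := fun (i : ℤ × ℕ) (_ : i ∈ I) => mIncr S i) (x, i) hi) le_rfl

lemma measurable_S_MB (hstart : ∀ x ω, S x 0 ω = x) {B : Set ℤ} {x : ℤ} (hx : x ∈ B) (k : ℕ) :
    Measurable[MB S B] (S x k) := by
  have : S x k = fun ω => x + ∑ i ∈ Finset.range k, (S x (i + 1) ω - S x i ω) := by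
    funext ω; exact S_eq hstart x k ω
  rw [this]
  apply Measurable.add
  · exact measurable_const
  · exact Finset.measurable_sum _ fun i _ =>
      measurable_incr_MI (I := B ×ˢ (Set.univ : Set ℕ)) (by simp [hx])

lemma measurableSet_rle_MB (hstart : ∀ x ω, S x 0 ω = x) {B : Set ℤ} {x : ℤ} (hx : x ∈ B)
    (c : ℤ) : MeasurableSet[MB S B] (Rle S x c) := by
  have : Rle S x c = ⋃ k, S x k ⁻¹' Set.Iic c := by
    ext ω; simp [Rle, Set.mem_iUnion, Set.mem_preimage]
  rw [this]
  exact MeasurableSet.iUnion fun k => (measurable_S_MB hstart hx k) measurableSet_Iic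


/-- The walk descent event: within `N` steps after time-index `j`, the partial sums of
increments of frog `x` go below `-m`. -/
def WEv (S : ℤ → ℕ → Ω → ℤ) (x : ℤ) (j m N : ℕ) : Set Ω :=
  {ω | ∃ t ≤ N, (∑ i ∈ Finset.Ico j (j + t), (S x (i + 1) ω - S x i ω)) ≤ -(m : ℤ)}

lemma measurableSet_WEv_MI {I : Set (ℤ × ℕ)} {x : ℤ} {j : ℕ}
    (hI : ∀ i, j ≤ i → (x, i) ∈ I) (m N : ℕ) :
    MeasurableSet[MI S I] (WEv S x j m N) := by
  have : WEv S x j m N = ⋃ (t : ℕ) (_ : t ≤ N),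
      (fun ω => ∑ i ∈ Finset.Ico j (j + t), (S x (i + 1) ω - S x i ω)) ⁻¹'
        Set.Iic (-(m : ℤ)) := by
    ext ω; simp [WEv, Set.mem_iUnion, Set.mem_preimage]
  rw [this]
  apply MeasurableSet.iUnion; intro t; apply MeasurableSet.iUnion; intro _
  have hsum : Measurable[MI S I]
      (fun ω => ∑ i ∈ Finset.Ico j (j + t), (S x (i + 1) ω - S x i ω)) :=
    Finset.measurable_sum _ fun i hi =>
      measurable_incr_MI (hI i (Finset.mem_Ico.1 hi).1)
  exact hsum measurableSet_Iic

lemma bad_null (hmeas : ∀ x n, Measurable (S x n)) (hα0 : 0 < α) (hα1 : α ≤ 1)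
    (hup : ∀ x n, μ {ω | S x (n + 1) ω - S x n ω = 1} = ENNReal.ofReal ((1 + α) / 2))
    (hdown : ∀ x n, μ {ω | S x (n + 1) ω - S x n ω = -1} = ENNReal.ofReal ((1 - α) / 2))
    (x : ℤ) (i : ℕ) :
    μ ({ω | S x (i + 1) ω - S x i ω = 1} ∪ {ω | S x (i + 1) ω - S x i ω = -1})ᶜ = 0 := by
  have hminc : Measurable (fun ω => S x (i + 1) ω - S x i ω) :=
    (hmeas x (i + 1)).sub (hmeas x i)
  have hm1 : MeasurableSet {ω | S x (i + 1) ω - S x i ω = 1} :=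
    hminc (MeasurableSet.singleton 1)
  have hm2 : MeasurableSet {ω | S x (i + 1) ω - S x i ω = -1} :=
    hminc (MeasurableSet.singleton (-1))
  have hdisj : Disjoint {ω | S x (i + 1) ω - S x i ω = 1}
      {ω | S x (i + 1) ω - S x i ω = -1} := by
    rw [Set.disjoint_left]; intro ω h1 h2; simp only [Set.mem_setOf_eq] at h1 h2; omega
  have hu : μ ({ω | S x (i + 1) ω - S x i ω = 1} ∪ {ω | S x (i + 1) ω - S x i ω = -1}) = 1 := by
    rw [measure_union hdisj hm2, hup, hdown, ← ENNReal.ofReal_add (by linarith) (by linarith)]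
    have : (1 + α) / 2 + (1 - α) / 2 = 1 := by ring
    rw [this, ENNReal.ofReal_one]
  rw [measure_compl (hm1.union hm2) (by simp), hu]
  simp

lemma walk_bound (hα0 : 0 < α) (hα1 : α ≤ 1)
    (hmeas : ∀ x n, Measurable (S x n))
    (hindep : ProbabilityTheory.iIndepFun
      (fun (p : ℤ × ℕ) (ω : Ω) => S p.1 (p.2 + 1) ω - S p.1 p.2 ω) μ)
    (hup : ∀ x n, μ {ω | S x (n + 1) ω - S x n ω = 1} = ENNReal.ofReal ((1 + α) / 2))
    (hdown : ∀ x n, μ {ω | S x (n + 1) ω - S x n ω = -1} = ENNReal.ofReal ((1 - α) / 2))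
    (x : ℤ) :
    ∀ N j m, μ (WEv S x j m N) ≤ ENNReal.ofReal (((1 - α) / (1 + α)) ^ m) := by
  have hα1' : (0:ℝ) < 1 + α := by linarith
  have hp0 : (0:ℝ) ≤ (1 - α) / (1 + α) := div_nonneg (by linarith) (by linarith)
  intro N
  induction N with
  | zero =>
    intro j m
    match m with
    | 0 => simpa using prob_le_one
    | m + 1 =>
      have : WEv S x j (m + 1) 0 = ∅ := by
        ext ω
        constructor
        · rintro ⟨t, ht, hsum⟩
          have ht0 : t = 0 := by omega
          subst ht0
          rw [Nat.add_zero, Finset.Ico_self, Finset.sum_empty] at hsum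
          exfalso; omega
        · intro h; exact absurd h (Set.notMem_empty ω)
      rw [this]; simp
  | succ N ih =>
    intro j m
    match m with
    | 0 => simpa using prob_le_one
    | m + 1 =>
      set A1 : Set Ω := {ω | S x (j + 1) ω - S x j ω = 1} with hA1
      set A2 : Set Ω := {ω | S x (j + 1) ω - S x j ω = -1} with hA2
      have hsub : WEv S x j (m + 1) (N + 1) ⊆
          (A1 ∩ WEv S x (j + 1) (m + 2) N) ∪ (A2 ∩ WEv S x (j + 1) m N) ∪ (A1 ∪ A2)ᶜ := by
        intro ω hω
        obtain ⟨t, ht, hsum⟩ := hω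
        have ht1 : 1 ≤ t := by
          rcases Nat.eq_zero_or_pos t with h | h
          · exfalso; rw [h] at hsum; simp at hsum; omega
          · exact h
        have hsplit : ∑ i ∈ Finset.Ico j (j + t), (S x (i + 1) ω - S x i ω) =
            (S x (j + 1) ω - S x j ω) +
              ∑ i ∈ Finset.Ico (j + 1) ((j + 1) + (t - 1)), (S x (i + 1) ω - S x i ω) := by
          have hJ : j + t = (j + 1) + (t - 1) := by omega
          rw [hJ, Finset.sum_eq_sum_Ico_succ_bot (by omega)]
        by_cases h1 : ω ∈ A1
        · left; left
          refine ⟨h1, t - 1, by omega, ?_⟩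
          have : S x (j + 1) ω - S x j ω = 1 := h1
          rw [hsplit, this] at hsum
          push_cast
          omega
        by_cases h2 : ω ∈ A2
        · left; right
          refine ⟨h2, t - 1, by omega, ?_⟩
          have : S x (j + 1) ω - S x j ω = -1 := h2
          rw [hsplit, this] at hsum
          push_cast
          omega
        · right; simp [h1, h2]
      have hbad : μ ((A1 ∪ A2)ᶜ) = 0 := bad_null μ hmeas hα0 hα1 hup hdown x j
      have hIdisj : Disjoint ({(x, j)} : Set (ℤ × ℕ)) ({x} ×ˢ Set.Ici (j + 1)) := by
        rw [Set.disjoint_left]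
        rintro ⟨y, i⟩ hy hz
        simp only [Set.mem_singleton_iff, Prod.mk.injEq] at hy
        simp only [Set.mem_prod, Set.mem_singleton_iff, Set.mem_Ici] at hz
        omega
      have hindep2 := indep_MI μ hmeas hindep hIdisj
      have hWmeas : ∀ m', MeasurableSet[MI S ({x} ×ˢ Set.Ici (j + 1))]
          (WEv S x (j + 1) m' N) := fun m' =>
        measurableSet_WEv_MI (fun i hi => by simp [Set.mem_prod, hi]) m' N
      have hA1m : MeasurableSet[MI S ({(x, j)} : Set (ℤ × ℕ))] A1 := by
        have h1 : Measurable[mIncr S (x, j)] (fun ω => S x (j + 1) ω - S x j ω) :=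
          comap_measurable _
        have h2 : Measurable[MI S ({(x, j)} : Set (ℤ × ℕ))]
            (fun ω => S x (j + 1) ω - S x j ω) :=
          h1.mono (le_iSup₂ (f := fun (i : ℤ × ℕ) (_ : i ∈ ({(x, j)} : Set (ℤ × ℕ))) =>
            mIncr S i) (x, j) rfl) le_rfl
        exact h2 (MeasurableSet.singleton 1)
      have hA2m : MeasurableSet[MI S ({(x, j)} : Set (ℤ × ℕ))] A2 := by
        have h1 : Measurable[mIncr S (x, j)] (fun ω => S x (j + 1) ω - S x j ω) :=
          comap_measurable _
        have h2 : Measurable[MI S ({(x, j)} : Set (ℤ × ℕ))]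
            (fun ω => S x (j + 1) ω - S x j ω) :=
          h1.mono (le_iSup₂ (f := fun (i : ℤ × ℕ) (_ : i ∈ ({(x, j)} : Set (ℤ × ℕ))) =>
            mIncr S i) (x, j) rfl) le_rfl
        exact h2 (MeasurableSet.singleton (-1))
      have e1 : μ (A1 ∩ WEv S x (j + 1) (m + 2) N) = μ A1 * μ (WEv S x (j + 1) (m + 2) N) :=
        (ProbabilityTheory.Indep_iff _ _ _).1 hindep2 _ _ hA1m (hWmeas (m + 2))
      have e2 : μ (A2 ∩ WEv S x (j + 1) m N) = μ A2 * μ (WEv S x (j + 1) m N) :=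
        (ProbabilityTheory.Indep_iff _ _ _).1 hindep2 _ _ hA2m (hWmeas m)
      calc μ (WEv S x j (m + 1) (N + 1))
          ≤ μ ((A1 ∩ WEv S x (j + 1) (m + 2) N) ∪ (A2 ∩ WEv S x (j + 1) m N) ∪ (A1 ∪ A2)ᶜ) :=
            measure_mono hsub
        _ ≤ μ ((A1 ∩ WEv S x (j + 1) (m + 2) N) ∪ (A2 ∩ WEv S x (j + 1) m N)) + μ ((A1 ∪ A2)ᶜ) :=
            measure_union_le _ _
        _ = μ ((A1 ∩ WEv S x (j + 1) (m + 2) N) ∪ (A2 ∩ WEv S x (j + 1) m N)) := by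
            rw [hbad, add_zero]
        _ ≤ μ (A1 ∩ WEv S x (j + 1) (m + 2) N) + μ (A2 ∩ WEv S x (j + 1) m N) :=
            measure_union_le _ _
        _ = μ A1 * μ (WEv S x (j + 1) (m + 2) N) + μ A2 * μ (WEv S x (j + 1) m N) := by
            rw [e1, e2]
        _ ≤ ENNReal.ofReal ((1 + α) / 2) * ENNReal.ofReal (((1 - α) / (1 + α)) ^ (m + 2)) +
            ENNReal.ofReal ((1 - α) / 2) * ENNReal.ofReal (((1 - α) / (1 + α)) ^ m) := by
            gcongr
            · exact le_of_eq (hup x j)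
            · exact ih (j + 1) (m + 2)
            · exact le_of_eq (hdown x j)
            · exact ih (j + 1) m
        _ = ENNReal.ofReal ((1 + α) / 2 * ((1 - α) / (1 + α)) ^ (m + 2) +
            (1 - α) / 2 * ((1 - α) / (1 + α)) ^ m) := by
            rw [← ENNReal.ofReal_mul (by linarith), ← ENNReal.ofReal_mul (by linarith),
              ← ENNReal.ofReal_add
                (mul_nonneg (by linarith) (pow_nonneg hp0 _))
                (mul_nonneg (by linarith) (pow_nonneg hp0 _))]
        _ = ENNReal.ofReal (((1 - α) / (1 + α)) ^ (m + 1)) := by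
            congr 1
            have hne : (1 + α) ≠ 0 := by linarith
            have hq : (1 + α) * ((1 - α) / (1 + α)) = 1 - α := mul_div_cancel₀ _ hne
            linear_combination (((1 - α) / (1 + α)) ^ m * ((1 - α) / (1 + α) - 1) / 2) * hq
      
lemma rle_bound (hα0 : 0 < α) (hα1 : α ≤ 1)
    (hmeas : ∀ x n, Measurable (S x n)) (hstart : ∀ x ω, S x 0 ω = x)
    (hindep : ProbabilityTheory.iIndepFun
      (fun (p : ℤ × ℕ) (ω : Ω) => S p.1 (p.2 + 1) ω - S p.1 p.2 ω) μ)
    (hup : ∀ x n, μ {ω | S x (n + 1) ω - S x n ω = 1} = ENNReal.ofReal ((1 + α) / 2))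
    (hdown : ∀ x n, μ {ω | S x (n + 1) ω - S x n ω = -1} = ENNReal.ofReal ((1 - α) / 2))
    (x : ℤ) (m : ℕ) :
    μ (Rle S x (x - (m : ℤ))) ≤ ENNReal.ofReal (((1 - α) / (1 + α)) ^ m) := by
  have hunion : Rle S x (x - (m : ℤ)) = ⋃ N, WEv S x 0 m N := by
    ext ω
    simp only [Rle, Set.mem_setOf_eq, Set.mem_iUnion, WEv]
    constructor
    · rintro ⟨k, hk⟩
      refine ⟨k, k, le_rfl, ?_⟩
      have := S_eq hstart x k ω
      rw [Finset.range_eq_Ico] at this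
      simp only [zero_add]
      omega
    · rintro ⟨N, t, _, hsum⟩
      refine ⟨t, ?_⟩
      have := S_eq hstart x t ω
      rw [Finset.range_eq_Ico] at this
      simp only [zero_add] at hsum
      omega
  rw [hunion]
  have hdir : Directed (· ⊆ ·) (fun N => WEv S x 0 m N) := by
    apply Monotone.directed_le
    intro N N' hNN' ω hω
    obtain ⟨t, ht, hs⟩ := hω
    exact ⟨t, le_trans ht hNN', hs⟩
  rw [hdir.measure_iUnion]
  exact iSup_le fun N => walk_bound μ hα0 hα1 hmeas hindep hup hdown x N 0 m


/-! ### Constants -/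

/-- Lower bound for the probability that no frog of a block beats the record. -/
noncomputable def Cd (p : ℝ) : ℝ := Real.exp (-(p / (1 - p) ^ 2))

/-- The base of the exponential weight. -/
noncomputable def sd (p : ℝ) : ℝ := 1 + Cd p * (1 - p) ^ 3 / (10 * (p + 1))

/-- The constant prefactor. -/
noncomputable def Ad (p : ℝ) : ℝ := 2 / ((1 - p) * Cd p)

section RealFacts

variable {p : ℝ}

lemma Cd_pos : 0 < Cd p := Real.exp_pos _

lemma Cd_le_one (hp0 : 0 ≤ p) (hp1 : p < 1) : Cd p ≤ 1 := by
  have h0 : 0 ≤ p / (1 - p) ^ 2 := div_nonneg hp0 (by positivity)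
  calc Cd p = Real.exp (-(p / (1 - p) ^ 2)) := rfl
    _ ≤ Real.exp 0 := Real.exp_le_exp.2 (by linarith)
    _ = 1 := Real.exp_zero

lemma sd_gt_one (hp0 : 0 ≤ p) (hp1 : p < 1) : 1 < sd p := by
  rw [sd]
  have h1 : 0 < Cd p := Cd_pos
  have h2 : (0:ℝ) < (1 - p) ^ 3 := pow_pos (by linarith) 3
  have h3 : (0:ℝ) < 10 * (p + 1) := by linarith
  have : 0 < Cd p * (1 - p) ^ 3 / (10 * (p + 1)) := by positivity
  linarith

lemma delta_le (hp0 : 0 ≤ p) (hp1 : p < 1) :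
    Cd p * (1 - p) ^ 3 / (10 * (p + 1)) ≤ (1 - p) / 10 := by
  have hC1 : Cd p ≤ 1 := Cd_le_one hp0 hp1
  have hC0 : 0 < Cd p := Cd_pos
  have h1p : 0 < 1 - p := by linarith
  rw [div_le_div_iff₀ (by linarith) (by norm_num)]
  have h2 : (1 - p) ^ 3 ≤ (1 - p) := by
    calc (1 - p) ^ 3 = (1 - p) * (1 - p) ^ 2 := by ring
      _ ≤ (1 - p) * 1 := by
          apply mul_le_mul_of_nonneg_left _ (by linarith)
          apply pow_le_one₀ (by linarith) (by linarith)
      _ = 1 - p := mul_one _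
  nlinarith

lemma sd_mul_p_le (hp0 : 0 ≤ p) (hp1 : p < 1) : sd p * p ≤ (1 + p) / 2 := by
  have hd := delta_le hp0 hp1
  have h1p : 0 < 1 - p := by linarith
  have hδ0 : 0 ≤ Cd p * (1 - p) ^ 3 / (10 * (p + 1)) := by
    have h1 : (0:ℝ) < Cd p := Cd_pos
    positivity
  rw [sd]
  have hst : p * (Cd p * (1 - p) ^ 3 / (10 * (p + 1))) ≤ (1 - p) / 10 := by
    calc p * (Cd p * (1 - p) ^ 3 / (10 * (p + 1)))
        ≤ 1 * (Cd p * (1 - p) ^ 3 / (10 * (p + 1))) :=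
          mul_le_mul_of_nonneg_right (by linarith) hδ0
      _ ≤ (1 - p) / 10 := by rw [one_mul]; exact hd
  nlinarith

lemma sd_mul_p_lt_one (hp0 : 0 ≤ p) (hp1 : p < 1) : sd p * p < 1 := by
  have := sd_mul_p_le hp0 hp1
  linarith

lemma sd_pos (hp0 : 0 ≤ p) (hp1 : p < 1) : 0 < sd p := by
  have := sd_gt_one hp0 hp1; linarith

lemma p_le_inv_sd (hp0 : 0 ≤ p) (hp1 : p < 1) : p ≤ (sd p)⁻¹ := by
  have hs := sd_pos hp0 hp1
  rw [inv_eq_one_div, le_div_iff₀ hs]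
  have := sd_mul_p_le hp0 hp1
  linarith

lemma one_sub_ge_exp (hp0 : 0 ≤ p) (hp1 : p < 1) {u : ℝ} (hu0 : 0 ≤ u) (hup : u ≤ p) :
    Real.exp (-(u / (1 - p))) ≤ 1 - u := by
  have hq : 0 < 1 - p := by linarith
  set x := u / (1 - p) with hxdef
  have hx0 : 0 ≤ x := div_nonneg hu0 hq.le
  have hu1 : 0 < 1 - u := by linarith
  have hux : u = x * (1 - p) := by rw [hxdef]; field_simp
  have h1 : 1 + x ≤ Real.exp x := by linarith [Real.add_one_le_exp x]
  have key : 1 ≤ (1 - u) * (1 + x) := by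
    have h2 : 0 ≤ x * (p - u) := mul_nonneg hx0 (by linarith)
    nlinarith
  have hmul : 1 ≤ (1 - u) * Real.exp x := by nlinarith
  rw [Real.exp_neg, inv_eq_one_div, div_le_iff₀ (Real.exp_pos _)]
  linarith

lemma prodC (hp0 : 0 ≤ p) (hp1 : p < 1) {l : ℤ} (F : Finset ℤ) (hF : ↑F ⊆ Set.Ici l) :
    Cd p ≤ ∏ x ∈ F, (1 - p ^ ((x - l).toNat + 1)) := by
  classical
  have hq : 0 < 1 - p := by linarith
  have hinj : ∀ x ∈ F, ∀ y ∈ F, (x - l).toNat = (y - l).toNat → x = y := by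
    intro x hx y hy hxy
    have hx' : l ≤ x := hF hx
    have hy' : l ≤ y := hF hy
    omega
  have hsum : ∑ x ∈ F, p ^ ((x - l).toNat + 1) ≤ p / (1 - p) := by
    rw [← Finset.sum_image (f := fun h => p ^ (h + 1)) (g := fun x => (x - l).toNat) hinj]
    obtain ⟨M, hM⟩ := Finset.exists_nat_subset_range (F.image fun x => (x - l).toNat)
    calc ∑ h ∈ F.image (fun x => (x - l).toNat), p ^ (h + 1)
        ≤ ∑ h ∈ Finset.range M, p ^ (h + 1) :=
          Finset.sum_le_sum_of_subset_of_nonneg hM (fun i _ _ => by positivity)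
      _ = p * ∑ h ∈ Finset.range M, p ^ h := by
          rw [Finset.mul_sum]; congr 1; funext h; ring
      _ ≤ p * (1 - p)⁻¹ := by
          apply mul_le_mul_of_nonneg_left _ hp0
          calc ∑ h ∈ Finset.range M, p ^ h
              ≤ ∑' h : ℕ, p ^ h :=
                Summable.sum_le_tsum _ (fun i _ => by positivity)
                  (summable_geometric_of_lt_one hp0 hp1)
            _ = (1 - p)⁻¹ := tsum_geometric_of_lt_one hp0 hp1
      _ = p / (1 - p) := by rw [div_eq_mul_inv]
  calc Cd p = Real.exp (-(p / (1 - p) ^ 2)) := rfl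
    _ ≤ Real.exp (∑ x ∈ F, -(p ^ ((x - l).toNat + 1) / (1 - p))) := by
        apply Real.exp_le_exp.2
        have hrw : ∑ x ∈ F, -(p ^ ((x - l).toNat + 1) / (1 - p)) =
            -((∑ x ∈ F, p ^ ((x - l).toNat + 1)) / (1 - p)) := by
          simp only [← neg_div]
          rw [← Finset.sum_div, Finset.sum_neg_distrib, neg_div]
        rw [hrw]
        have h2 : p / (1 - p) ^ 2 = (p / (1 - p)) / (1 - p) := by
          rw [div_div, sq]
        rw [h2]
        apply neg_le_neg
        gcongr
    _ = ∏ x ∈ F, Real.exp (-(p ^ ((x - l).toNat + 1) / (1 - p))) := by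
        rw [Real.exp_sum]
    _ ≤ ∏ x ∈ F, (1 - p ^ ((x - l).toNat + 1)) := by
        apply Finset.prod_le_prod (fun i _ => (Real.exp_pos _).le)
        intro x _
        apply one_sub_ge_exp hp0 hp1 (by positivity)
        calc p ^ ((x - l).toNat + 1) ≤ p ^ 1 :=
              pow_le_pow_of_le_one hp0 hp1.le (by omega)
          _ = p := pow_one p

end RealFacts

end Lemmas

lemma pow_sub_one_le {s : ℝ} (hs : 1 ≤ s) : ∀ v : ℕ, s ^ v - 1 ≤ (v : ℝ) * (s - 1) * s ^ v := by
  intro v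
  induction v with
  | zero => simp
  | succ v ih =>
    have hsv : (1:ℝ) ≤ s ^ v := one_le_pow₀ hs
    have hsv1 : (1:ℝ) ≤ s ^ (v + 1) := one_le_pow₀ hs
    have hs0 : (0:ℝ) < s := by linarith
    have h2 : s * (s ^ v - 1) ≤ s * ((v : ℝ) * (s - 1) * s ^ v) :=
      mul_le_mul_of_nonneg_left ih hs0.le
    have hpow : s ^ (v + 1) = s * s ^ v := by rw [pow_succ]; ring
    have h3 : (s - 1) ≤ (s - 1) * s ^ (v + 1) := by nlinarith
    push_cast
    nlinarith

lemma series_bound {p : ℝ} (hp0 : 0 ≤ p) (hp1 : p < 1) (k : ℕ) :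
    ∑ v ∈ Finset.Ico 1 k, (sd p ^ v - 1) * (p ^ v * (1 - p)⁻¹) ≤ Cd p / 2 := by
  have hs1 : 1 ≤ sd p := (sd_gt_one hp0 hp1).le
  have hq : (0:ℝ) < 1 - p := by linarith
  set s := sd p with hsdef
  set δ := s - 1 with hδdef
  have hδ0 : 0 ≤ δ := by rw [hδdef]; linarith
  set r := s * p with hrdef
  have hr0 : 0 ≤ r := mul_nonneg (by linarith) hp0
  have hr1 : r < 1 := sd_mul_p_lt_one hp0 hp1
  have hrhalf : (1 - p) / 2 ≤ 1 - r := by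
    have := sd_mul_p_le hp0 hp1
    rw [hrdef]; linarith
  have hnorm : ‖r‖ < 1 := by rw [Real.norm_eq_abs, abs_of_nonneg hr0]; exact hr1
  have hsummable : Summable (fun v : ℕ => (v : ℝ) * r ^ v) := by
    have h := summable_pow_mul_geometric_of_norm_lt_one 1 hnorm
    simpa using h
  have htsum : ∑' v : ℕ, (v : ℝ) * r ^ v = r / (1 - r) ^ 2 :=
    tsum_coe_mul_geometric_of_norm_lt_one hnorm
  have hterm : ∀ v ∈ Finset.Ico 1 k, (s ^ v - 1) * (p ^ v * (1 - p)⁻¹) ≤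
      (δ * (1 - p)⁻¹) * ((v : ℝ) * r ^ v) := by
    intro v _
    have h1 : s ^ v - 1 ≤ (v : ℝ) * δ * s ^ v := pow_sub_one_le hs1 v
    have h2 : (0:ℝ) ≤ p ^ v * (1 - p)⁻¹ := by positivity
    calc (s ^ v - 1) * (p ^ v * (1 - p)⁻¹)
        ≤ ((v : ℝ) * δ * s ^ v) * (p ^ v * (1 - p)⁻¹) := mul_le_mul_of_nonneg_right h1 h2
      _ = (δ * (1 - p)⁻¹) * ((v : ℝ) * (s ^ v * p ^ v)) := by ring
      _ = (δ * (1 - p)⁻¹) * ((v : ℝ) * r ^ v) := by rw [← mul_pow]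
  have hC0 : 0 < Cd p := Cd_pos
  calc ∑ v ∈ Finset.Ico 1 k, (s ^ v - 1) * (p ^ v * (1 - p)⁻¹)
      ≤ ∑ v ∈ Finset.Ico 1 k, (δ * (1 - p)⁻¹) * ((v : ℝ) * r ^ v) := Finset.sum_le_sum hterm
    _ = (δ * (1 - p)⁻¹) * ∑ v ∈ Finset.Ico 1 k, ((v : ℝ) * r ^ v) := by rw [Finset.mul_sum]
    _ ≤ (δ * (1 - p)⁻¹) * (r / (1 - r) ^ 2) := by
        apply mul_le_mul_of_nonneg_left _ (by positivity)
        rw [← htsum]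
        exact Summable.sum_le_tsum _ (fun i _ => by positivity) hsummable
    _ ≤ Cd p / 2 := by
        have h4 : r / (1 - r) ^ 2 ≤ 4 / (1 - p) ^ 2 := by
          rw [div_le_div_iff₀ (by nlinarith) (by positivity)]
          have h5 : ((1 - p) / 2) ^ 2 ≤ (1 - r) ^ 2 :=
            pow_le_pow_left₀ (by linarith) hrhalf 2
          nlinarith
        have hδval : δ = Cd p * (1 - p) ^ 3 / (10 * (p + 1)) := by
          rw [hδdef, hsdef, sd]; ring
        calc (δ * (1 - p)⁻¹) * (r / (1 - r) ^ 2)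
            ≤ (δ * (1 - p)⁻¹) * (4 / (1 - p) ^ 2) := by
              apply mul_le_mul_of_nonneg_left h4 (by positivity)
          _ = 4 * δ / (1 - p) ^ 3 := by
              field_simp
          _ = 4 * Cd p / (10 * (p + 1)) := by
              rw [hδval]
              field_simp
          _ ≤ Cd p / 2 := by
              rw [div_le_div_iff₀ (by linarith) (by norm_num)]
              nlinarith

lemma arith_bound {p : ℝ} (hp0 : 0 ≤ p) (hp1 : p < 1) (k : ℕ) :
    p ^ k * (1 - p)⁻¹ + Ad p * ((sd p)⁻¹) ^ k * (1 - Cd p / 2) ≤ Ad p * ((sd p)⁻¹) ^ k := by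
  have hC0 : 0 < Cd p := Cd_pos
  have hq : (0:ℝ) < 1 - p := by linarith
  have hACp : Ad p * (Cd p / 2) = (1 - p)⁻¹ := by
    rw [Ad]
    field_simp
  have hpow : p ^ k ≤ ((sd p)⁻¹) ^ k :=
    pow_le_pow_left₀ hp0 (p_le_inv_sd hp0 hp1) k
  have h1 : Ad p * ((sd p)⁻¹) ^ k - Ad p * ((sd p)⁻¹) ^ k * (1 - Cd p / 2)
      = ((sd p)⁻¹) ^ k * ((1 - p)⁻¹) := by
    rw [← hACp]; ring
  have h2 : p ^ k * (1 - p)⁻¹ ≤ ((sd p)⁻¹) ^ k * (1 - p)⁻¹ :=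
    mul_le_mul_of_nonneg_right hpow (by positivity)
  linarith

section Stage

variable [MeasurableSpace Ω] (μ : Measure Ω) [IsProbabilityMeasure μ]
variable {S : ℤ → ℕ → Ω → ℤ} {p : ℝ}

lemma MB_mono {A B : Set ℤ} (h : A ⊆ B) : MB S A ≤ MB S B :=
  MI_mono (Set.prod_mono h (le_refl _))

lemma final_bound
    (hrle : ∀ (x : ℤ) (m : ℕ), μ (Rle S x (x - (m : ℤ))) ≤ ENNReal.ofReal (p ^ m))
    (hp0 : 0 ≤ p) (hp1 : p < 1) {B : Set ℤ} {l : ℤ} (hB : B ⊆ Set.Ici l) (k : ℕ) :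
    μ (FinalE S B (l - (k : ℤ))) ≤ ENNReal.ofReal (p ^ k * (1 - p)⁻¹) := by
  have step1 : μ (FinalE S B (l - (k : ℤ))) ≤ ∑' x : B, ENNReal.ofReal (p ^ ((↑x - l).toNat + k)) := by
    refine le_trans (measure_biUnion_le μ (Set.to_countable B) _) (ENNReal.tsum_le_tsum ?_)
    intro x
    have hx : l ≤ (x : ℤ) := hB x.2
    have htn : (((↑x - l).toNat : ℤ)) = ↑x - l := Int.toNat_of_nonneg (by omega)
    have heq : (l - (k : ℤ)) = (x : ℤ) - ((((↑x : ℤ) - l).toNat + k : ℕ) : ℤ) := by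
      push_cast
      omega
    rw [heq]
    exact hrle x _
  have step2 : ∑' x : B, ENNReal.ofReal (p ^ ((↑x - l).toNat + k)) ≤
      ∑' h : ℕ, ENNReal.ofReal (p ^ (h + k)) := by
    apply Summable.tsum_le_tsum_of_inj (fun x : B => ((↑x : ℤ) - l).toNat)
    · intro x y hxy
      simp only at hxy
      have hx : l ≤ (x : ℤ) := hB x.2
      have hy : l ≤ (y : ℤ) := hB y.2
      have : (x : ℤ) = (y : ℤ) := by omega
      exact Subtype.ext this
    · intro c _; exact zero_le
    · intro x; exact le_rfl
    · exact ENNReal.summable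
    · exact ENNReal.summable
  have step3 : ∑' h : ℕ, ENNReal.ofReal (p ^ (h + k)) = ENNReal.ofReal (p ^ k * (1 - p)⁻¹) := by
    have hcong : ∀ h : ℕ, ENNReal.ofReal (p ^ (h + k)) =
        ENNReal.ofReal (p ^ k) * (ENNReal.ofReal p) ^ h := by
      intro h
      rw [← ENNReal.ofReal_pow hp0, ← ENNReal.ofReal_mul (pow_nonneg hp0 k), pow_add]
      ring_nf
    rw [tsum_congr hcong, ENNReal.tsum_mul_left, ENNReal.tsum_geometric]
    have h1 : (1 : ℝ≥0∞) - ENNReal.ofReal p = ENNReal.ofReal (1 - p) := by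
      rw [ENNReal.ofReal_sub _ hp0, ENNReal.ofReal_one]
    rw [h1, ← ENNReal.ofReal_inv_of_pos (by linarith), ← ENNReal.ofReal_mul (pow_nonneg hp0 k)]
  exact le_trans step1 (le_trans step2 (le_of_eq step3))

lemma prod_compl (hmeas : ∀ x n, Measurable (S x n)) (hstart : ∀ x ω, S x 0 ω = x)
    (hindep : ProbabilityTheory.iIndepFun
      (fun (p : ℤ × ℕ) (ω : Ω) => S p.1 (p.2 + 1) ω - S p.1 p.2 ω) μ)
    (c : ℤ → ℤ) (F : Finset ℤ) :
    μ (⋂ x ∈ F, (Rle S x (c x))ᶜ) = ∏ x ∈ F, μ ((Rle S x (c x))ᶜ) := by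
  classical
  induction F using Finset.induction_on with
  | empty => simp
  | @insert a F' ha ih =>
    rw [Finset.set_biInter_insert, Finset.prod_insert ha, ← ih]
    have hdisj : Disjoint ({a} : Set ℤ) (↑F' : Set ℤ) := by
      rw [Set.disjoint_left]
      intro x hx hx'
      rw [Set.mem_singleton_iff] at hx
      subst hx
      exact ha (by exact_mod_cast hx')
    have hind := indep_MB μ hmeas hindep hdisj
    have h1 : MeasurableSet[MB S ({a} : Set ℤ)] ((Rle S a (c a))ᶜ) :=
      (measurableSet_rle_MB hstart (Set.mem_singleton a) (c a)).compl
    have h2 : MeasurableSet[MB S (↑F' : Set ℤ)] (⋂ x ∈ F', (Rle S x (c x))ᶜ) :=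
      MeasurableSet.biInter (Set.to_countable _)
        fun x hx => (measurableSet_rle_MB hstart (hx : x ∈ (↑F' : Set ℤ)) (c x)).compl
    exact (hind.indepSet_of_measurableSet h1 h2).measure_inter_eq_mul

lemma death_fin (hmeas : ∀ x n, Measurable (S x n)) (hstart : ∀ x ω, S x 0 ω = x)
    (hindep : ProbabilityTheory.iIndepFun
      (fun (p : ℤ × ℕ) (ω : Ω) => S p.1 (p.2 + 1) ω - S p.1 p.2 ω) μ)
    (hrle : ∀ (x : ℤ) (m : ℕ), μ (Rle S x (x - (m : ℤ))) ≤ ENNReal.ofReal (p ^ m))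
    (hp0 : 0 ≤ p) (hp1 : p < 1) {l : ℤ} (F : Finset ℤ) (hF : ↑F ⊆ Set.Ici l) :
    μ (⋃ x ∈ F, Rle S x (l - 1)) ≤ ENNReal.ofReal (1 - Cd p) := by
  have hU : MeasurableSet (⋃ x ∈ F, Rle S x (l - 1)) :=
    F.measurableSet_biUnion fun x _ => measurable_rle hmeas x _
  have hcompl : (⋃ x ∈ F, Rle S x (l - 1))ᶜ = ⋂ x ∈ F, (Rle S x (l - 1))ᶜ := by
    simp [Set.compl_iUnion]
  have hge : ENNReal.ofReal (Cd p) ≤ μ ((⋃ x ∈ F, Rle S x (l - 1))ᶜ) := by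
    rw [hcompl, prod_compl μ hmeas hstart hindep (fun _ => l - 1) F]
    calc ENNReal.ofReal (Cd p)
        ≤ ENNReal.ofReal (∏ x ∈ F, (1 - p ^ ((x - l).toNat + 1))) :=
          ENNReal.ofReal_le_ofReal (prodC hp0 hp1 F hF)
      _ = ∏ x ∈ F, ENNReal.ofReal (1 - p ^ ((x - l).toNat + 1)) :=
          ENNReal.ofReal_prod_of_nonneg fun x _ => by
            have := pow_le_one₀ hp0 hp1.le (n := (x - l).toNat + 1)
            linarith
      _ ≤ ∏ x ∈ F, μ ((Rle S x (l - 1))ᶜ) := by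
          apply Finset.prod_le_prod'
          intro x hx
          have hx' : l ≤ x := hF hx
          have hrle' : μ (Rle S x (l - 1)) ≤ ENNReal.ofReal (p ^ ((x - l).toNat + 1)) := by
            have htn : (((x - l).toNat : ℤ)) = x - l := Int.toNat_of_nonneg (by omega)
            have heq : l - 1 = x - ((((x : ℤ) - l).toNat + 1 : ℕ) : ℤ) := by
              push_cast
              omega
            rw [heq]
            exact hrle x _
          have hm : μ ((Rle S x (l - 1))ᶜ) = 1 - μ (Rle S x (l - 1)) :=
            prob_compl_eq_one_sub (measurable_rle hmeas x _)
          rw [hm]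
          calc ENNReal.ofReal (1 - p ^ ((x - l).toNat + 1))
              = 1 - ENNReal.ofReal (p ^ ((x - l).toNat + 1)) := by
                rw [ENNReal.ofReal_sub _ (by positivity), ENNReal.ofReal_one]
            _ ≤ 1 - μ (Rle S x (l - 1)) := tsub_le_tsub_left hrle' _
  have hμU : μ (⋃ x ∈ F, Rle S x (l - 1)) = 1 - μ ((⋃ x ∈ F, Rle S x (l - 1))ᶜ) := by
    rw [prob_compl_eq_one_sub hU]
    rw [ENNReal.sub_sub_cancel ENNReal.one_ne_top prob_le_one]
  rw [hμU]
  calc 1 - μ ((⋃ x ∈ F, Rle S x (l - 1))ᶜ) ≤ 1 - ENNReal.ofReal (Cd p) :=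
        tsub_le_tsub_left hge _
    _ = ENNReal.ofReal (1 - Cd p) := by
        rw [ENNReal.ofReal_sub _ (Cd_pos (p := p)).le, ENNReal.ofReal_one]

lemma death_bound (hmeas : ∀ x n, Measurable (S x n)) (hstart : ∀ x ω, S x 0 ω = x)
    (hindep : ProbabilityTheory.iIndepFun
      (fun (p : ℤ × ℕ) (ω : Ω) => S p.1 (p.2 + 1) ω - S p.1 p.2 ω) μ)
    (hrle : ∀ (x : ℤ) (m : ℕ), μ (Rle S x (x - (m : ℤ))) ≤ ENNReal.ofReal (p ^ m))
    (hp0 : 0 ≤ p) (hp1 : p < 1) {B : Set ℤ} {l : ℤ} (hB : B ⊆ Set.Ici l) :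
    μ (⋃ x ∈ B, Rle S x (l - 1)) ≤ ENNReal.ofReal (1 - Cd p) := by
  have hcover : (⋃ x ∈ B, Rle S x (l - 1)) =
      ⋃ N : ℕ, ⋃ x ∈ B ∩ Set.Icc l (l + N), Rle S x (l - 1) := by
    ext ω
    simp only [Set.mem_iUnion, Set.mem_inter_iff, Set.mem_Icc]
    constructor
    · rintro ⟨x, hx, hω⟩
      have hx' : l ≤ x := hB hx
      exact ⟨(x - l).toNat, x, ⟨hx, hx', by omega⟩, hω⟩
    · rintro ⟨N, x, ⟨hx, _⟩, hω⟩
      exact ⟨x, hx, hω⟩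
  rw [hcover]
  have hdir : Directed (· ⊆ ·) (fun N : ℕ => ⋃ x ∈ B ∩ Set.Icc l (l + N), Rle S x (l - 1)) := by
    apply Monotone.directed_le
    intro N N' hNN'
    apply Set.iUnion₂_mono'
    intro x hx
    refine ⟨x, ⟨hx.1, hx.2.1, le_trans hx.2.2 (by exact_mod_cast by omega)⟩, le_rfl⟩
  rw [hdir.measure_iUnion]
  apply iSup_le
  intro N
  have hfin : (B ∩ Set.Icc l (l + N)).Finite :=
    (Set.finite_Icc l (l + N)).subset Set.inter_subset_right
  have hrw : ⋃ x ∈ B ∩ Set.Icc l (l + N), Rle S x (l - 1) =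
      ⋃ x ∈ hfin.toFinset, Rle S x (l - 1) := by
    simp only [Set.Finite.mem_toFinset]
  rw [hrw]
  apply death_fin μ hmeas hstart hindep hrle hp0 hp1
  intro x hx
  rw [Set.Finite.coe_toFinset] at hx
  exact hB hx.1

end Stage



section TLayer

variable [MeasurableSpace Ω] (μ : Measure Ω) [IsProbabilityMeasure μ]
variable {S : ℤ → ℕ → Ω → ℤ} {p : ℝ}

lemma Rle_mono {x c c' : ℤ} (h : c ≤ c') : Rle S x c ⊆ Rle S x c' :=
  fun ω ⟨k, hk⟩ => ⟨k, le_trans hk h⟩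

lemma T_eq (S : ℤ → ℕ → Ω → ℤ) (k : ℕ) (l : ℤ) (B : Set ℤ) :
    T S k l B = FinalE S B (l - k) ∪
      ⋃ (v : ℕ) (_ : v ∈ Finset.Ico 1 k),
        (ExactE S B (l - v) ∩ T S (k - v) (l - v) (Set.Ico (l - v) l)) := by
  rw [T]

lemma measurableSet_final_MB (hstart : ∀ x ω, S x 0 ω = x) {B : Set ℤ} (b : ℤ) :
    MeasurableSet[MB S B] (FinalE S B b) :=
  MeasurableSet.biUnion (Set.to_countable B) fun _ hx => measurableSet_rle_MB hstart hx b

lemma measurableSet_exact_MB (hstart : ∀ x ω, S x 0 ω = x) {B : Set ℤ} (b : ℤ) :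
    MeasurableSet[MB S B] (ExactE S B b) :=
  (measurableSet_final_MB hstart b).inter
    (MeasurableSet.biInter (Set.to_countable B) fun _ hx =>
      (measurableSet_rle_MB hstart hx (b - 1)).compl)

lemma measurableSet_T_MB (hstart : ∀ x ω, S x 0 ω = x) :
    ∀ (k : ℕ) (l : ℤ) (B : Set ℤ), MeasurableSet[MB S (B ∪ Set.Iio l)] (T S k l B) := by
  intro k
  induction k using Nat.strong_induction_on with
  | _ k ih =>
    intro l B
    rw [T_eq]
    apply MeasurableSet.union
    · exact MB_mono Set.subset_union_left _ (measurableSet_final_MB hstart _)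
    · apply MeasurableSet.iUnion; intro v
      apply MeasurableSet.iUnion; intro hv
      simp only [Finset.mem_Ico] at hv
      apply MeasurableSet.inter
      · exact MB_mono Set.subset_union_left _ (measurableSet_exact_MB hstart _)
      · have h1 := ih (k - v) (by omega) (l - v) (Set.Ico (l - v) l)
        have h2 : (Set.Ico (l - (v:ℤ)) l ∪ Set.Iio (l - (v:ℤ))) ⊆ (B ∪ Set.Iio l) := by
          intro x hx
          right
          rcases hx with h | h
          · exact h.2
          · simp only [Set.mem_Iio] at h ⊢; omega
        exact MB_mono h2 _ h1

lemma T_subset_death {k : ℕ} (hk : 1 ≤ k) (l : ℤ) (B : Set ℤ) :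
    T S k l B ⊆ ⋃ x ∈ B, Rle S x (l - 1) := by
  rw [T_eq]
  apply Set.union_subset
  · apply Set.iUnion₂_mono
    intro x _
    apply Rle_mono
    omega
  · apply Set.iUnion₂_subset
    intro v hv
    simp only [Finset.mem_Ico] at hv
    refine Set.Subset.trans Set.inter_subset_left (Set.Subset.trans Set.inter_subset_left ?_)
    apply Set.iUnion₂_mono
    intro x _
    apply Rle_mono
    omega

lemma exact_disjoint {B : Set ℤ} {l : ℤ} :
    ∀ v v' : ℕ, v < v' → Disjoint (ExactE S B (l - v)) (ExactE S B (l - v')) := by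
  intro v v' hvv'
  rw [Set.disjoint_left]
  rintro ω ⟨_, hω2⟩ ⟨hω3, _⟩
  simp only [Set.mem_iUnion] at hω3
  obtain ⟨x, hx, hRle⟩ := hω3
  have hω2' := Set.mem_iInter₂.1 hω2 x hx
  apply hω2'
  exact Rle_mono (by omega) hRle

lemma T_bound (hmeas : ∀ x n, Measurable (S x n)) (hstart : ∀ x ω, S x 0 ω = x)
    (hindep : ProbabilityTheory.iIndepFun
      (fun (p : ℤ × ℕ) (ω : Ω) => S p.1 (p.2 + 1) ω - S p.1 p.2 ω) μ)
    (hrle : ∀ (x : ℤ) (m : ℕ), μ (Rle S x (x - (m : ℤ))) ≤ ENNReal.ofReal (p ^ m))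
    (hp0 : 0 ≤ p) (hp1 : p < 1) :
    ∀ (k : ℕ) (l : ℤ) (B : Set ℤ), B ⊆ Set.Ici l →
      μ (T S k l B) ≤ ENNReal.ofReal (Ad p * ((sd p)⁻¹) ^ k) := by
  have hC0 : 0 < Cd p := Cd_pos
  have hC1 : Cd p ≤ 1 := Cd_le_one hp0 hp1
  have hs0 : 0 < sd p := sd_pos hp0 hp1
  have hA0 : 0 < Ad p := by
    rw [Ad]; exact div_pos (by norm_num) (mul_pos (by linarith) hC0)
  intro k
  induction k using Nat.strong_induction_on with
  | _ k ih =>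
    intro l B hB
    rw [T_eq]
    -- the exact-events bound
    have hexact : ∀ v : ℕ, μ (ExactE S B (l - (v:ℤ))) ≤ ENNReal.ofReal (p ^ v * (1 - p)⁻¹) :=
      fun v => le_trans (measure_mono Set.inter_subset_left) (final_bound μ hrle hp0 hp1 hB v)
    -- the weighted mass bound
    have hmass : ∑ v ∈ Finset.Ico 1 k, ENNReal.ofReal (sd p ^ v) * μ (ExactE S B (l - (v:ℤ)))
        ≤ ENNReal.ofReal (1 - Cd p / 2) := by
      have hsplit : ∀ v ∈ Finset.Ico 1 k,
          ENNReal.ofReal (sd p ^ v) * μ (ExactE S B (l - (v:ℤ))) =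
            μ (ExactE S B (l - (v:ℤ))) +
              ENNReal.ofReal (sd p ^ v - 1) * μ (ExactE S B (l - (v:ℤ))) := by
        intro v _
        have h1 : (1:ℝ) ≤ sd p ^ v := one_le_pow₀ (sd_gt_one hp0 hp1).le
        have : ENNReal.ofReal (sd p ^ v) = 1 + ENNReal.ofReal (sd p ^ v - 1) := by
          rw [← ENNReal.ofReal_one, ← ENNReal.ofReal_add (by norm_num) (by linarith)]
          norm_num
        rw [this, add_mul, one_mul]
      rw [Finset.sum_congr rfl hsplit, Finset.sum_add_distrib]
      have hsum1 : ∑ v ∈ Finset.Ico 1 k, μ (ExactE S B (l - (v:ℤ)))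
          ≤ ENNReal.ofReal (1 - Cd p) := by
        have hdisjE : (↑(Finset.Ico 1 k) : Set ℕ).PairwiseDisjoint
            (fun v : ℕ => ExactE S B (l - (v:ℤ))) := by
          intro v _ v' _ hne
          rcases lt_or_gt_of_ne hne with h | h
          · exact exact_disjoint v v' h
          · exact (exact_disjoint v' v h).symm
        have hmeasE : ∀ v ∈ Finset.Ico 1 k, MeasurableSet (ExactE S B (l - (v:ℤ))) :=
          fun v _ => MI_le hmeas _ _ (measurableSet_exact_MB hstart _)
        rw [← measure_biUnion_finset hdisjE hmeasE]
        refine le_trans (measure_mono ?_) (death_bound μ hmeas hstart hindep hrle hp0 hp1 hB)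
        apply Set.iUnion₂_subset
        intro v hv
        simp only [Finset.mem_Ico] at hv
        refine Set.Subset.trans Set.inter_subset_left ?_
        apply Set.iUnion₂_mono
        intro x _
        apply Rle_mono
        omega
      have hsum2 : ∑ v ∈ Finset.Ico 1 k, ENNReal.ofReal (sd p ^ v - 1) * μ (ExactE S B (l - (v:ℤ)))
          ≤ ENNReal.ofReal (Cd p / 2) := by
        calc ∑ v ∈ Finset.Ico 1 k, ENNReal.ofReal (sd p ^ v - 1) * μ (ExactE S B (l - (v:ℤ)))
            ≤ ∑ v ∈ Finset.Ico 1 k,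
                ENNReal.ofReal (sd p ^ v - 1) * ENNReal.ofReal (p ^ v * (1 - p)⁻¹) := by
              apply Finset.sum_le_sum
              intro v _
              exact mul_le_mul_right (hexact v) _
          _ = ∑ v ∈ Finset.Ico 1 k, ENNReal.ofReal ((sd p ^ v - 1) * (p ^ v * (1 - p)⁻¹)) := by
              apply Finset.sum_congr rfl
              intro v _
              have h1 : (1:ℝ) ≤ sd p ^ v := one_le_pow₀ (sd_gt_one hp0 hp1).le
              rw [← ENNReal.ofReal_mul (by linarith)]
          _ = ENNReal.ofReal (∑ v ∈ Finset.Ico 1 k, (sd p ^ v - 1) * (p ^ v * (1 - p)⁻¹)) := by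
              rw [ENNReal.ofReal_sum_of_nonneg]
              intro v _
              have h1 : (1:ℝ) ≤ sd p ^ v := one_le_pow₀ (sd_gt_one hp0 hp1).le
              have h2 : (0:ℝ) ≤ p ^ v * (1 - p)⁻¹ :=
                mul_nonneg (pow_nonneg hp0 v) (inv_nonneg.2 (by linarith))
              nlinarith
          _ ≤ ENNReal.ofReal (Cd p / 2) :=
              ENNReal.ofReal_le_ofReal (series_bound hp0 hp1 k)
      calc ∑ v ∈ Finset.Ico 1 k, μ (ExactE S B (l - (v:ℤ))) +
            ∑ v ∈ Finset.Ico 1 k, ENNReal.ofReal (sd p ^ v - 1) * μ (ExactE S B (l - (v:ℤ)))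
          ≤ ENNReal.ofReal (1 - Cd p) + ENNReal.ofReal (Cd p / 2) := add_le_add hsum1 hsum2
        _ = ENNReal.ofReal (1 - Cd p / 2) := by
            rw [← ENNReal.ofReal_add (by linarith) (by linarith)]
            congr 1
            ring
    -- the per-v product bound
    have hprod : ∀ v ∈ Finset.Ico 1 k,
        μ (ExactE S B (l - (v:ℤ)) ∩ T S (k - v) (l - (v:ℤ)) (Set.Ico (l - (v:ℤ)) l))
          ≤ (ENNReal.ofReal (sd p ^ v) * μ (ExactE S B (l - (v:ℤ)))) *
              ENNReal.ofReal (Ad p * ((sd p)⁻¹) ^ k) := by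
      intro v hv
      simp only [Finset.mem_Ico] at hv
      have hdisj : Disjoint B (Set.Ico (l - (v:ℤ)) l ∪ Set.Iio (l - (v:ℤ))) := by
        rw [Set.disjoint_left]
        intro x hx hx'
        have hxl : l ≤ x := hB hx
        rcases hx' with h | h
        · exact absurd h.2 (by omega)
        · simp only [Set.mem_Iio] at h; omega
      have hind := indep_MB μ hmeas hindep hdisj
      have hmul : μ (ExactE S B (l - (v:ℤ)) ∩ T S (k - v) (l - (v:ℤ)) (Set.Ico (l - (v:ℤ)) l))
          = μ (ExactE S B (l - (v:ℤ))) * μ (T S (k - v) (l - (v:ℤ)) (Set.Ico (l - (v:ℤ)) l)) :=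
        (hind.indepSet_of_measurableSet (measurableSet_exact_MB hstart _)
          (measurableSet_T_MB hstart _ _ _)).measure_inter_eq_mul
      have hIH : μ (T S (k - v) (l - (v:ℤ)) (Set.Ico (l - (v:ℤ)) l))
          ≤ ENNReal.ofReal (Ad p * ((sd p)⁻¹) ^ (k - v)) :=
        ih (k - v) (by omega) (l - (v:ℤ)) (Set.Ico (l - (v:ℤ)) l) (fun x hx => hx.1)
      have hid : Ad p * ((sd p)⁻¹) ^ (k - v) = (Ad p * ((sd p)⁻¹) ^ k) * sd p ^ v := by
        have hs0' : sd p ≠ 0 := ne_of_gt hs0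
        have hpow : ((sd p)⁻¹) ^ k = ((sd p)⁻¹) ^ (k - v) * ((sd p)⁻¹) ^ v := by
          rw [← pow_add]
          congr 1
          omega
        calc Ad p * ((sd p)⁻¹) ^ (k - v)
            = Ad p * ((sd p)⁻¹) ^ (k - v) * (((sd p)⁻¹ * sd p) ^ v) := by
              rw [inv_mul_cancel₀ hs0', one_pow, mul_one]
          _ = (Ad p * (((sd p)⁻¹) ^ (k - v) * ((sd p)⁻¹) ^ v)) * sd p ^ v := by
              rw [mul_pow]; ring
          _ = (Ad p * ((sd p)⁻¹) ^ k) * sd p ^ v := by rw [← hpow]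
      calc μ (ExactE S B (l - (v:ℤ)) ∩ T S (k - v) (l - (v:ℤ)) (Set.Ico (l - (v:ℤ)) l))
          ≤ μ (ExactE S B (l - (v:ℤ))) * ENNReal.ofReal (Ad p * ((sd p)⁻¹) ^ (k - v)) := by
            rw [hmul]; exact mul_le_mul_right hIH _
        _ = μ (ExactE S B (l - (v:ℤ))) *
              (ENNReal.ofReal (Ad p * ((sd p)⁻¹) ^ k) * ENNReal.ofReal (sd p ^ v)) := by
            rw [hid, ENNReal.ofReal_mul (by positivity)]
        _ = (ENNReal.ofReal (sd p ^ v) * μ (ExactE S B (l - (v:ℤ)))) *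
              ENNReal.ofReal (Ad p * ((sd p)⁻¹) ^ k) := by
            ring
    -- assemble
    calc μ (FinalE S B (l - (k:ℤ)) ∪
          ⋃ (v : ℕ) (_ : v ∈ Finset.Ico 1 k),
            (ExactE S B (l - v) ∩ T S (k - v) (l - v) (Set.Ico (l - v) l)))
        ≤ μ (FinalE S B (l - (k:ℤ))) +
            μ (⋃ (v : ℕ) (_ : v ∈ Finset.Ico 1 k),
              (ExactE S B (l - v) ∩ T S (k - v) (l - v) (Set.Ico (l - v) l))) :=
          measure_union_le _ _
      _ ≤ ENNReal.ofReal (p ^ k * (1 - p)⁻¹) +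
            ∑ v ∈ Finset.Ico 1 k,
              μ (ExactE S B (l - (v:ℤ)) ∩ T S (k - v) (l - (v:ℤ)) (Set.Ico (l - (v:ℤ)) l)) :=
          add_le_add (final_bound μ hrle hp0 hp1 hB k) (measure_biUnion_finset_le _ _)
      _ ≤ ENNReal.ofReal (p ^ k * (1 - p)⁻¹) +
            (∑ v ∈ Finset.Ico 1 k, ENNReal.ofReal (sd p ^ v) * μ (ExactE S B (l - (v:ℤ)))) *
              ENNReal.ofReal (Ad p * ((sd p)⁻¹) ^ k) := by
          apply add_le_add le_rfl
          rw [Finset.sum_mul]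
          exact Finset.sum_le_sum hprod
      _ ≤ ENNReal.ofReal (p ^ k * (1 - p)⁻¹) +
            ENNReal.ofReal (1 - Cd p / 2) * ENNReal.ofReal (Ad p * ((sd p)⁻¹) ^ k) := by
          apply add_le_add le_rfl
          exact mul_le_mul_left hmass _
      _ = ENNReal.ofReal (p ^ k * (1 - p)⁻¹ +
            Ad p * ((sd p)⁻¹) ^ k * (1 - Cd p / 2)) := by
          rw [← ENNReal.ofReal_mul (by linarith : (0:ℝ) ≤ 1 - Cd p / 2),
            ← ENNReal.ofReal_add
              (mul_nonneg (pow_nonneg hp0 k) (inv_nonneg.2 (by linarith)))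
              (mul_nonneg (by linarith)
                (mul_nonneg hA0.le (pow_nonneg (inv_nonneg.2 hs0.le) k)))]
          congr 1
          ring
      _ ≤ ENNReal.ofReal (Ad p * ((sd p)⁻¹) ^ k) :=
          ENNReal.ofReal_le_ofReal (arith_bound hp0 hp1 k)

end TLayer

section Inclusion

variable [MeasurableSpace Ω] {S : ℤ → ℕ → Ω → ℤ}

lemma chain_ge {ω : Ω} {l : ℤ} (hl : l ≤ 0)
    (hsafe : ∀ x : ℤ, l ≤ x → ∀ m : ℕ, l ≤ S x m ω) :
    ∀ u, Relation.ReflTransGen (fun u v : ℤ => ∃ m : ℕ, S u m ω = v) 0 u → l ≤ u := by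
  intro u h
  induction h with
  | refl => exact hl
  | tail _ hbc ih =>
    obtain ⟨m, hm⟩ := hbc
    rw [← hm]
    exact hsafe _ ih m

lemma incl :
    ∀ (k : ℕ) (l : ℤ) (B : Set ℤ) (ω : Ω),
      1 ≤ k → l ≤ 0 → B ⊆ Set.Ici l →
      (∀ x : ℤ, l ≤ x → x ∉ B → ∀ m : ℕ, l - 1 < S x m ω) →
      Relation.ReflTransGen (fun u v : ℤ => ∃ m : ℕ, S u m ω = v) 0 (l - k) →
      ω ∈ T S k l B := by
  intro k
  induction k using Nat.strong_induction_on with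
  | _ k ihk =>
    intro l B ω hk hl0 hB hold hreach
    rw [T_eq]
    by_cases hcase1 : ∃ x ∈ B, ∃ m, S x m ω ≤ l - k
    · left
      obtain ⟨x, hx, m, hm⟩ := hcase1
      exact Set.mem_biUnion hx ⟨m, hm⟩
    · push_neg at hcase1
      by_cases hcase2 : ∃ x ∈ B, ∃ m, S x m ω ≤ l - 1
      · obtain ⟨x0, hx0, m0, hm0⟩ := hcase2
        have hk2 : 2 ≤ k := by
          have := hcase1 x0 hx0 m0
          omega
        obtain ⟨b, ⟨⟨x1, hx1, m1, hm1⟩, hbgt⟩, hleast⟩ :=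
          Int.exists_least_of_bdd
            (P := fun v : ℤ => (∃ x ∈ B, ∃ m : ℕ, S x m ω ≤ v) ∧ l - k < v)
            ⟨l - k + 1, fun z hz => by omega⟩
            ⟨l - 1, ⟨x0, hx0, m0, hm0⟩, by omega⟩
        have hble : b ≤ l - 1 :=
          hleast (l - 1) ⟨⟨x0, hx0, m0, hm0⟩, by omega⟩
        -- no frog of B goes below b
        have hnb : ∀ x ∈ B, ∀ m : ℕ, b - 1 < S x m ω := by
          intro x hx m
          by_contra hcon
          push_neg at hcon
          by_cases hbl : l - k < b - 1
          · have := hleast (b - 1) ⟨⟨x, hx, m, hcon⟩, hbl⟩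
            omega
          · have := hcase1 x hx m
            omega
        set v : ℕ := (l - b).toNat with hvdef
        have hlv : l - (v : ℤ) = b := by
          have : ((l - b).toNat : ℤ) = l - b := Int.toNat_of_nonneg (by omega)
          omega
        have hv1 : 1 ≤ v := by omega
        have hvk : v < k := by omega
        right
        refine Set.mem_iUnion.2 ⟨v, Set.mem_iUnion.2 ⟨Finset.mem_Ico.2 ⟨hv1, hvk⟩, ?_, ?_⟩⟩
        · -- the exact event
          rw [show l - (v : ℤ) = b from hlv]
          refine ⟨Set.mem_biUnion hx1 ⟨m1, hm1⟩, Set.mem_iInter₂.2 ?_⟩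
          intro x hx
          intro hcon
          obtain ⟨m, hm⟩ := hcon
          exact absurd hm (not_le.2 (hnb x hx m))
        · -- the recursive event
          rw [show l - (v : ℤ) = b from hlv]
          apply ihk (k - v) (by omega) b (Set.Ico b l) ω
          · omega
          · omega
          · exact fun x hx => hx.1
          · intro x hx hxIco m
            by_cases hxl : l ≤ x
            · by_cases hxB : x ∈ B
              · exact hnb x hxB m
              · have := hold x hxl hxB m
                omega
            · exact absurd ⟨hx, by omega⟩ hxIco
          · have : b - ((k - v : ℕ) : ℤ) = l - (k : ℤ) := by
              have hcast : ((k - v : ℕ) : ℤ) = (k : ℤ) - (v : ℤ) := by omega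
              omega
            rw [this]
            exact hreach
      · exfalso
        push_neg at hcase2
        have hsafe : ∀ x : ℤ, l ≤ x → ∀ m : ℕ, l ≤ S x m ω := by
          intro x hx m
          by_cases hxB : x ∈ B
          · have := hcase2 x hxB m
            omega
          · have := hold x hx hxB m
            omega
        have := chain_ge hl0 hsafe _ hreach
        omega

lemma event_subset_T (n : ℕ) (hn : 1 ≤ n) :
    {ω : Ω | Relation.ReflTransGen (fun u v : ℤ => ∃ m : ℕ, S u m ω = v) 0 (-(n : ℤ))} ⊆
      T S n 0 (Set.Ici 0) := by
  intro ω hω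
  apply incl n 0 (Set.Ici 0) ω hn le_rfl (fun x hx => hx)
  · intro x hx hxB
    exact absurd hx hxB
  · show Relation.ReflTransGen _ 0 ((0 : ℤ) - (n : ℤ))
    rw [zero_sub]
    exact hω

end Inclusion

end Stmt7Aux

open Stmt7Aux in
/-- In the frog model on ℤ with drift α > 0: the probability that site -n is ever
visited by an active frog decays exponentially in n. -/
theorem stmt7 {Ω : Type*} [MeasurableSpace Ω] (μ : Measure Ω) [IsProbabilityMeasure μ]
    (α : ℝ) (hα0 : 0 < α) (hα1 : α ≤ 1)
    (S : ℤ → ℕ → Ω → ℤ)  -- trajectory of the frog initially at x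
    (hmeas : ∀ x n, Measurable (S x n))
    (hstart : ∀ x ω, S x 0 ω = x)
    (hindep : ProbabilityTheory.iIndepFun
      (fun (p : ℤ × ℕ) (ω : Ω) => S p.1 (p.2 + 1) ω - S p.1 p.2 ω) μ)
    (hup : ∀ x n, μ {ω | S x (n + 1) ω - S x n ω = 1} = ENNReal.ofReal ((1 + α) / 2))
    (hdown : ∀ x n, μ {ω | S x (n + 1) ω - S x n ω = -1} = ENNReal.ofReal ((1 - α) / 2)) :
    ∃ c > (0 : ℝ), ∀ n : ℕ, 1 ≤ n →
      μ {ω | Relation.ReflTransGen (fun u v : ℤ => ∃ m : ℕ, S u m ω = v) 0 (-(n : ℤ))} ≤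
        ENNReal.ofReal (Real.exp (-c * n)) := by
  classical
  have hα1' : (0:ℝ) < 1 + α := by linarith
  set p : ℝ := (1 - α) / (1 + α) with hpdef
  have hp0 : 0 ≤ p := div_nonneg (by linarith) (by linarith)
  have hp1 : p < 1 := by
    rw [hpdef, div_lt_one hα1']; linarith
  have hrle : ∀ (x : ℤ) (m : ℕ), μ (Rle S x (x - (m:ℤ))) ≤ ENNReal.ofReal (p ^ m) :=
    fun x m => rle_bound μ hα0 hα1 hmeas hstart hindep hup hdown x m
  have hC0 : 0 < Cd p := Cd_pos
  have hC1 : Cd p ≤ 1 := Cd_le_one hp0 hp1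
  have hboundA : ∀ n : ℕ, 1 ≤ n →
      μ {ω | Relation.ReflTransGen (fun u v : ℤ => ∃ m : ℕ, S u m ω = v) 0 (-(n : ℤ))} ≤
        ENNReal.ofReal (Ad p * ((sd p)⁻¹) ^ n) := by
    intro n hn
    refine le_trans (measure_mono (event_subset_T n hn)) ?_
    exact T_bound μ hmeas hstart hindep hrle hp0 hp1 n 0 (Set.Ici 0) (fun x hx => hx)
  have hboundB : ∀ n : ℕ, 1 ≤ n →
      μ {ω | Relation.ReflTransGen (fun u v : ℤ => ∃ m : ℕ, S u m ω = v) 0 (-(n : ℤ))} ≤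
        ENNReal.ofReal (1 - Cd p) := by
    intro n hn
    refine le_trans (measure_mono (Set.Subset.trans (event_subset_T n hn)
      (T_subset_death hn 0 (Set.Ici 0)))) ?_
    exact death_bound μ hmeas hstart hindep hrle hp0 hp1 (Set.Subset.refl _)
  -- constants
  have hs1 : 1 < sd p := sd_gt_one hp0 hp1
  have hspos : 0 < sd p := by linarith
  have hσl : 0 < Real.log (sd p) := Real.log_pos hs1
  have hK1 : 1 ≤ Ad p := by
    have hd0 : 0 < (1 - p) * Cd p := mul_pos (by linarith) hC0
    have hd1 : (1 - p) * Cd p ≤ 1 := by nlinarith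
    rw [Ad, le_div_iff₀ hd0]
    linarith
  have hKpos : 0 < Ad p := by linarith
  set β : ℝ := max (1 - Cd p) (Real.exp (-1)) with hβdef
  have hβ0 : 0 < β := lt_of_lt_of_le (Real.exp_pos _) (le_max_right _ _)
  have hβ1 : β < 1 := by
    apply max_lt
    · linarith
    · have h := Real.exp_lt_exp.2 (show (-1:ℝ) < 0 by norm_num)
      simpa [Real.exp_zero] using h
  set N0 : ℕ := Nat.ceil (2 * Real.log (Ad p) / Real.log (sd p)) + 1 with hN0def
  have hN0pos : 0 < N0 := Nat.succ_pos _
  set c : ℝ := min (Real.log (sd p) / 2) (-Real.log β / N0) with hcdef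
  have hc0 : 0 < c := by
    apply lt_min
    · positivity
    · apply div_pos
      · have : Real.log β < 0 := Real.log_neg hβ0 hβ1
        linarith
      · exact_mod_cast hN0pos
  refine ⟨c, hc0, ?_⟩
  intro n hn
  by_cases hcase : n ≤ N0
  · refine le_trans (hboundB n hn) (ENNReal.ofReal_le_ofReal ?_)
    have h1 : (1 - Cd p) ≤ β := le_max_left _ _
    have h2 : β ≤ Real.exp (-c * n) := by
      have hcle : c ≤ -Real.log β / N0 := min_le_right _ _
      have hn' : (n:ℝ) ≤ (N0:ℝ) := by exact_mod_cast hcase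
      have hcn : c * n ≤ -Real.log β := by
        calc c * n ≤ (-Real.log β / N0) * N0 := by
              apply mul_le_mul hcle hn' (by positivity) ?_
              have hlb : Real.log β < 0 := Real.log_neg hβ0 hβ1
              apply div_nonneg (by linarith) (by positivity)
          _ = -Real.log β := by
              field_simp
      calc β = Real.exp (Real.log β) := (Real.exp_log hβ0).symm
        _ ≤ Real.exp (-c * n) := Real.exp_le_exp.2 (by linarith)
    linarith
  · push_neg at hcase
    refine le_trans (hboundA n hn) (ENNReal.ofReal_le_ofReal ?_)
    have hinv : ((sd p)⁻¹ : ℝ) ^ n = Real.exp (-(Real.log (sd p)) * n) := by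
      have h1 : (sd p)⁻¹ = Real.exp (-Real.log (sd p)) := by
        rw [Real.exp_neg, Real.exp_log hspos]
      rw [h1, ← Real.exp_nat_mul]
      ring_nf
    have hKe : Ad p = Real.exp (Real.log (Ad p)) := (Real.exp_log hKpos).symm
    calc Ad p * ((sd p)⁻¹) ^ n
        = Real.exp (Real.log (Ad p) + -(Real.log (sd p)) * n) := by
          rw [hinv, Real.exp_add, ← hKe]
      _ ≤ Real.exp (-c * n) := by
          apply Real.exp_le_exp.2
          have hcs : c ≤ Real.log (sd p) / 2 := min_le_left _ _
          have hlogK : Real.log (Ad p) ≤ (n:ℝ) * (Real.log (sd p) / 2) := by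
            have h1 : 2 * Real.log (Ad p) / Real.log (sd p) ≤ (N0:ℝ) := by
              have := Nat.le_ceil (2 * Real.log (Ad p) / Real.log (sd p))
              have h2 : ((Nat.ceil (2 * Real.log (Ad p) / Real.log (sd p)) : ℕ) : ℝ) ≤ (N0:ℝ) := by
                exact_mod_cast Nat.le_succ _
              linarith
            have h2 : (N0 : ℝ) ≤ (n:ℝ) := by exact_mod_cast hcase.le
            have h3 : 2 * Real.log (Ad p) / Real.log (sd p) ≤ (n:ℝ) := le_trans h1 h2
            rw [div_le_iff₀ hσl] at h3
            linarith
          have hprod : (n:ℝ) * c ≤ (n:ℝ) * (Real.log (sd p) / 2) :=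
            mul_le_mul_of_nonneg_left hcs (by positivity)
          linarith
end

section
/- Fix $d \geq 1$, $k \in \mathbb{Z}$, and weight $w \in (0,1]$. For a random walk on $\mathbb{Z}^d$ with transition probabilities $\pi_{w,\alpha}$, let $T_k$ be the entrance time of the hyperplane $H_k = \{x : x_1 = k\}$ and $T_k'$ the last visit time to $H_k$. On the event $\{T_k < \infty\}$, the number of distinct vertices of $H_k \setminus L_0$ visited by the walk is at most $\mathbf{1}\{\text{at least one step in a non-}e_1\text{ direction occurred before } T_k\}$ plus the number of non-$e_1$ steps taken in the time interval $(T_k, T_k']$, where $L_0 = \{y : y_i = 0 \text{ for } 2 \leq i \leq d\}$. -/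
/-- Pathwise bound: for a nearest-neighbour trajectory in `ℤ^d` started at 0 that
visits the hyperplane `H_k = {x : x₁ = k}` at least once and finitely often, the
number of distinct vertices of `H_k \ L₀` visited (where `L₀` is the first
coordinate axis) is at most the indicator that some non-`e₁` step occurred before
the entrance time `T_k`, plus the number of non-`e₁` steps in the interval
`(T_k, T_k']`, where `T_k'` is the last visit time to `H_k`. -/
theorem stmt8 (d : ℕ) (hd : 0 < d) (k : ℤ) (S : ℕ → Fin d → ℤ)
    (h0 : S 0 = fun _ => 0)
    (hstep : ∀ n, (∑ i, (S (n + 1) i - S n i).natAbs) = 1)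
    (hne : {n : ℕ | S n ⟨0, hd⟩ = k}.Nonempty)
    (hfin : {n : ℕ | S n ⟨0, hd⟩ = k}.Finite) :
    -- entrance time and last visit time of the hyperplane H_k
    letI Tk : ℕ := sInf {n : ℕ | S n ⟨0, hd⟩ = k}
    letI Tk' : ℕ := sSup {n : ℕ | S n ⟨0, hd⟩ = k}
    -- the step between times j and j+1 is in a non-e₁ direction
    letI nonE1 : ℕ → Prop := fun j => ∃ i : Fin d, i ≠ ⟨0, hd⟩ ∧ S (j + 1) i ≠ S j i
    -- visited vertices of H_k \ L₀
    ({x : Fin d → ℤ | (∃ n, S n = x) ∧ x ⟨0, hd⟩ = k ∧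
        ¬(∀ i : Fin d, i ≠ ⟨0, hd⟩ → x i = 0)}).ncard ≤
      min 1 ({m : ℕ | m < Tk ∧ nonE1 m}.ncard) +
        ({j : ℕ | Tk ≤ j ∧ j < Tk' ∧ nonE1 j}).ncard := by
  classical
  beta_reduce
  set i0 : Fin d := ⟨0, hd⟩ with hi0
  set nonE1 : ℕ → Prop := fun j => ∃ i : Fin d, i ≠ i0 ∧ S (j + 1) i ≠ S j i with hnonE1
  set Tk : ℕ := sInf {n : ℕ | S n i0 = k} with hTk
  set Tk' : ℕ := sSup {n : ℕ | S n i0 = k} with hTk'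
  set V : Set (Fin d → ℤ) := {x : Fin d → ℤ | (∃ n, S n = x) ∧ x i0 = k ∧
      ¬(∀ i : Fin d, i ≠ i0 → x i = 0)} with hVdef
  show V.ncard ≤ 1 ⊓ {m | m < Tk ∧ nonE1 m}.ncard + {j | Tk ≤ j ∧ j < Tk' ∧ nonE1 j}.ncard
  -- if no non-e₁ step occurs in [a,b), the non-first coordinates are constant there
  have hconst : ∀ a b : ℕ, a ≤ b → (∀ j, a ≤ j → j < b → ¬ nonE1 j) →
      ∀ i, i ≠ i0 → S b i = S a i := by
    intro a b hab
    induction b, hab using Nat.le_induction with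
    | base => intro _ i _; rfl
    | succ b hab ih =>
      intro hno i hi
      have h1 : ¬ nonE1 b := hno b hab (Nat.lt_succ_self b)
      have h2 : S (b + 1) i = S b i := by
        by_contra h
        exact h1 ⟨i, hi, h⟩
      rw [h2]
      exact ih (fun j hj hj' => hno j hj (hj'.trans (Nat.lt_succ_self b))) i hi
  have hxy : ∀ x y : Fin d → ℤ, x i0 = k → y i0 = k →
      (∀ i, i ≠ i0 → x i = y i) → x = y := by
    intro x y hx hy h
    funext i
    by_cases hi : i = i0
    · rw [hi, hx, hy]
    · exact h i hi
  have hTkmem : S Tk i0 = k := Nat.sInf_mem hne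
  have hVfin : V.Finite := by
    apply (hfin.image S).subset
    rintro x ⟨⟨n0, hn0⟩, hk, _⟩
    exact ⟨n0, by rw [Set.mem_setOf_eq, hn0, hk], hn0⟩
  have hsub : V ⊆ (V ∩ {S Tk}) ∪ (V \ {S Tk}) := by
    intro x hx
    by_cases h : x = S Tk
    · exact Or.inl ⟨hx, h⟩
    · exact Or.inr ⟨hx, h⟩
  have hle : V.ncard ≤ (V ∩ {S Tk}).ncard + (V \ {S Tk}).ncard :=
    le_trans (Set.ncard_le_ncard hsub ((hVfin.inter_of_left _).union hVfin.diff))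
      (Set.ncard_union_le _ _)
  -- part 1
  have h1 : (V ∩ {S Tk}).ncard ≤ 1 ⊓ {m | m < Tk ∧ nonE1 m}.ncard := by
    rcases Set.eq_empty_or_nonempty (V ∩ {S Tk}) with he | ⟨x, hxV, hxs⟩
    · simp [he]
    · have hSTk : S Tk ∈ V := by rwa [Set.mem_singleton_iff.mp hxs] at hxV
      obtain ⟨-, -, hax⟩ := hSTk
      push_neg at hax
      obtain ⟨i, hi, hne0⟩ := hax
      have hM : ∃ m, m < Tk ∧ nonE1 m := by
        by_contra h
        push_neg at h
        have h2 := hconst 0 Tk (Nat.zero_le _) (fun j _ hj => h j hj) i hi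
        rw [h0] at h2
        exact hne0 h2
      obtain ⟨m, hm, hmE⟩ := hM
      have hMfin : {m | m < Tk ∧ nonE1 m}.Finite :=
        (Set.finite_Iio Tk).subset (fun j hj => hj.1)
      have hpos : 1 ≤ {m | m < Tk ∧ nonE1 m}.ncard :=
        (Set.ncard_pos hMfin).mpr ⟨m, hm, hmE⟩
      calc (V ∩ {S Tk}).ncard ≤ ({S Tk} : Set (Fin d → ℤ)).ncard :=
            Set.ncard_le_ncard Set.inter_subset_right (Set.finite_singleton _)
        _ = 1 := Set.ncard_singleton _
        _ ≤ 1 ⊓ {m | m < Tk ∧ nonE1 m}.ncard := le_min le_rfl hpos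
  -- part 2
  have h2 : (V \ {S Tk}).ncard ≤ {j | Tk ≤ j ∧ j < Tk' ∧ nonE1 j}.ncard := by
    have hBfin : {j | Tk ≤ j ∧ j < Tk' ∧ nonE1 j}.Finite :=
      (Set.finite_Iio Tk').subset fun j hj => hj.2.1
    set f : (Fin d → ℤ) → ℕ := fun x =>
      if h : ∃ n, S n = x then Nat.findGreatest nonE1 (Nat.find h - 1) else 0 with hf
    have hfacts : ∀ x (hx : x ∈ V \ {S Tk}),
        Tk < Nat.find hx.1.1 ∧ Nat.find hx.1.1 ≤ Tk' ∧
        Tk ≤ f x ∧ f x + 1 ≤ Nat.find hx.1.1 ∧ nonE1 (f x) ∧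
        f x = Nat.findGreatest nonE1 (Nat.find hx.1.1 - 1) := by
      intro x hx
      have hvis : ∃ n, S n = x := hx.1.1
      set nx := Nat.find hvis with hnx
      have hSnx : S nx = x := Nat.find_spec hvis
      have hmemx : nx ∈ {n : ℕ | S n i0 = k} := by
        rw [Set.mem_setOf_eq, hSnx]; exact hx.1.2.1
      have hTknx : Tk ≤ nx := Nat.sInf_le hmemx
      have hnxTk' : nx ≤ Tk' := le_csSup hfin.bddAbove hmemx
      have hlt : Tk < nx := by
        rcases lt_or_eq_of_le hTknx with h | h
        · exact h
        · exact absurd (by rw [h, hSnx] : S Tk = x) (fun hh => hx.2 hh.symm)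
      have hex : ∃ m, Tk ≤ m ∧ m < nx ∧ nonE1 m := by
        by_contra h
        push_neg at h
        have hc := hconst Tk nx hTknx (fun j hj hj' => h j hj hj')
        have : S nx = S Tk := hxy _ _ (by rw [hSnx]; exact hx.1.2.1) hTkmem hc
        exact hx.2 (by rw [Set.mem_singleton_iff, ← hSnx, this])
      obtain ⟨m, hmTk, hmnx, hmE⟩ := hex
      have hfx : f x = Nat.findGreatest nonE1 (nx - 1) := dif_pos hvis
      have hge : m ≤ Nat.findGreatest nonE1 (nx - 1) :=
        Nat.le_findGreatest (by omega) hmE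
      have hle' : Nat.findGreatest nonE1 (nx - 1) ≤ nx - 1 := Nat.findGreatest_le _
      have hspec : nonE1 (Nat.findGreatest nonE1 (nx - 1)) :=
        Nat.findGreatest_spec (m := m) (by omega) hmE
      refine ⟨hlt, hnxTk', ?_, ?_, ?_, hfx⟩
      · rw [hfx]; omega
      · rw [hfx]; omega
      · rw [hfx]; exact hspec
    have hmaps : ∀ x ∈ V \ {S Tk}, f x ∈ {j | Tk ≤ j ∧ j < Tk' ∧ nonE1 j} := by
      intro x hx
      obtain ⟨h1', h2', h3', h4', h5', -⟩ := hfacts x hx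
      exact ⟨h3', by omega, h5'⟩
    have hkey : ∀ x (hx : x ∈ V \ {S Tk}) y (hy : y ∈ V \ {S Tk}),
        Nat.find hx.1.1 ≤ Nat.find hy.1.1 → f x = f y → x = y := by
      intro x hx y hy hnle hfeq
      obtain ⟨hx1, hx2, hx3, hx4, hx5, hx6⟩ := hfacts x hx
      obtain ⟨hy1, hy2, hy3, hy4, hy5, hy6⟩ := hfacts y hy
      set nx := Nat.find hx.1.1
      set ny := Nat.find hy.1.1
      have hcx : ∀ i, i ≠ i0 → S nx i = S (f x + 1) i := by
        apply hconst (f x + 1) nx hx4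
        intro j hj hj'
        rw [hx6] at hj
        exact Nat.findGreatest_is_greatest (n := nx - 1) (by omega) (by omega)
      have hcy : ∀ i, i ≠ i0 → S ny i = S (f y + 1) i := by
        apply hconst (f y + 1) ny hy4
        intro j hj hj'
        rw [hy6] at hj
        exact Nat.findGreatest_is_greatest (n := ny - 1) (by omega) (by omega)
      have hSx : S nx = x := Nat.find_spec hx.1.1
      have hSy : S ny = y := Nat.find_spec hy.1.1
      -- but we need nx vs ny relation only through f x = f y
      have heq : S nx = S ny := by
        apply hxy
        · rw [hSx]; exact hx.1.2.1
        · rw [hSy]; exact hy.1.2.1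
        · intro i hi
          rw [hcx i hi, hcy i hi, hfeq]
      rw [← hSx, ← hSy, heq]
    have hinj : Set.InjOn f (V \ {S Tk}) := by
      intro x hx y hy hfeq
      rcases le_total (Nat.find hx.1.1) (Nat.find hy.1.1) with h | h
      · exact hkey x hx y hy h hfeq
      · exact (hkey y hy x hx h hfeq.symm).symm
    exact Set.ncard_le_ncard_of_injOn f hmaps hinj hBfin
  exact le_trans hle (Nat.add_le_add h1 h2)
end
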